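/- Let Λ be a full-rank lattice in ℝ^{d+1} (coordinates (x₀,…,x_d)) such that Λ ∩ {x : x₀ = 0} = {0}, and let z_ν ∈ Λ, ν ≥ 1, be its sequence of best approximation points to the x₀-axis, with z_{0,ν} strictly increasing positive and |z̲_ν|_∞ strictly decreasing; assume the points z_ν do not lie in a proper linear subspace of ℝ^{d+1}. Define indices ν₁=1, ν₂=2, and inductively ν_j as the smallest μ ≥ ν_{j−1}+1 such that z_{ν₁},…,z_{ν_{j−1}},z_μ are linearly independent; let π_j be the real span of z_{ν₁},…,z_{ν_j}, Γ_j = π_j ∩ Λ, and Δ_j the j-dimensional fundamental volume of Γ_j. Then for every j one has Δ_{j+1}/Δ_j ≤ 2√d · (z_{0,ν_{j+1}}/z_{0,ν_{j+1}−1}) · |z̲_{ν_{j+1}−1}|_∞. -/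

import Mathlib

/-- The `k`-dimensional volume of the parallelepiped spanned by `B`, i.e. the square root of
the Gram determinant; for a ℤ-basis of a rank-`k` lattice this is its fundamental volume. -/
noncomputable def gramVol {n k : ℕ} (B : Fin k → Fin n → ℝ) : ℝ :=
  Real.sqrt (Matrix.det (Matrix.of fun i i' : Fin k => ∑ l, B i l * B i' l))

open Matrix

private lemma gram_eq_mul {n k : ℕ} (B : Fin k → Fin n → ℝ) :
    (Matrix.of fun i i' : Fin k => ∑ l, B i l * B i' l) = Matrix.of B * (Matrix.of B)ᵀ := by
  ext i i'
  simp [Matrix.mul_apply]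

private lemma gram_det_nonneg {n k : ℕ} (B : Fin k → Fin n → ℝ) :
    0 ≤ Matrix.det (Matrix.of fun i i' : Fin k => ∑ l, B i l * B i' l) := by
  rw [gram_eq_mul]
  have hps : (Matrix.of B * (Matrix.of B)ᵀ).PosSemidef := by
    have := Matrix.posSemidef_self_mul_conjTranspose (Matrix.of B)
    rwa [Matrix.conjTranspose_eq_transpose_of_trivial] at this
  rw [hps.isHermitian.det_eq_prod_eigenvalues]
  exact Finset.prod_nonneg fun i _ => by exact_mod_cast hps.eigenvalues_nonneg i

private lemma det_gram_transform {n k : ℕ} (A : Fin k → Fin n → ℝ) (B : Fin k → Fin n → ℝ)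
    (M : Matrix (Fin k) (Fin k) ℝ) (h : Matrix.of A = M * Matrix.of B) :
    Matrix.det (Matrix.of fun i i' : Fin k => ∑ l, A i l * A i' l) =
      M.det ^ 2 * Matrix.det (Matrix.of fun i i' : Fin k => ∑ l, B i l * B i' l) := by
  rw [gram_eq_mul, gram_eq_mul, h, Matrix.transpose_mul, ← Matrix.mul_assoc, Matrix.mul_assoc M,
    Matrix.det_mul, Matrix.det_mul, Matrix.det_transpose]
  ring

private lemma det_gram_snoc_orth {n k : ℕ} (B : Fin k → Fin n → ℝ) (h : Fin n → ℝ)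
    (horth : ∀ i, ∑ l, B i l * h l = 0) :
    Matrix.det (Matrix.of fun i i' : Fin (k + 1) =>
        ∑ l, (Fin.snoc B h : Fin (k+1) → Fin n → ℝ) i l *
          (Fin.snoc B h : Fin (k+1) → Fin n → ℝ) i' l) =
      (∑ l, h l * h l) *
        Matrix.det (Matrix.of fun i i' : Fin k => ∑ l, B i l * B i' l) := by
  set G : Matrix (Fin (k + 1)) (Fin (k + 1)) ℝ :=
    Matrix.of fun i i' : Fin (k + 1) =>
      ∑ l, (Fin.snoc B h : Fin (k+1) → Fin n → ℝ) i l *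
        (Fin.snoc B h : Fin (k+1) → Fin n → ℝ) i' l with hG
  have hlastrow : ∀ i0 : Fin k, G (Fin.last k) (Fin.castSucc i0) = 0 := by
    intro i0
    show (∑ l, (Fin.snoc B h : Fin (k+1) → Fin n → ℝ) (Fin.last k) l *
      (Fin.snoc B h : Fin (k+1) → Fin n → ℝ) (Fin.castSucc i0) l) = 0
    simp only [Fin.snoc_last, Fin.snoc_castSucc]
    rw [← horth i0]
    exact Finset.sum_congr rfl fun l _ => mul_comm _ _
  rw [Matrix.det_succ_row G (Fin.last k)]
  rw [Finset.sum_eq_single (Fin.last k)]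
  · have h1 : G (Fin.last k) (Fin.last k) = ∑ l, h l * h l := by
      show (∑ l, (Fin.snoc B h : Fin (k+1) → Fin n → ℝ) (Fin.last k) l *
        (Fin.snoc B h : Fin (k+1) → Fin n → ℝ) (Fin.last k) l) = _
      simp only [Fin.snoc_last]
    have h2 : (G.submatrix (Fin.last k).succAbove (Fin.last k).succAbove) =
        Matrix.of fun i i' : Fin k => ∑ l, B i l * B i' l := by
      ext i i'
      simp only [Matrix.submatrix_apply, Fin.succAbove_last]
      show (∑ l, (Fin.snoc B h : Fin (k+1) → Fin n → ℝ) (Fin.castSucc i) l *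
        (Fin.snoc B h : Fin (k+1) → Fin n → ℝ) (Fin.castSucc i') l) = _
      simp only [Fin.snoc_castSucc, Matrix.of_apply]
    rw [h1, h2]
    have h3 : ((-1 : ℝ)) ^ ((Fin.last k : ℕ) + (Fin.last k : ℕ)) = 1 :=
      Even.neg_one_pow ⟨k, rfl⟩
    rw [h3]; ring
  · intro b _ hb
    obtain ⟨b0, rfl⟩ := Fin.exists_castSucc_eq.2 hb
    rw [hlastrow b0]
    ring
  · intro hmem; exact absurd (Finset.mem_univ _) hmem

private lemma det_gram_snoc_sub_mem {n k : ℕ} (B : Fin k → Fin n → ℝ) (z u : Fin n → ℝ)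
    (hu : u ∈ Submodule.span ℝ (Set.range B)) :
    Matrix.det (Matrix.of fun i i' : Fin (k+1) =>
        ∑ l, (Fin.snoc B (fun l => z l - u l) : Fin (k+1) → Fin n → ℝ) i l *
          (Fin.snoc B (fun l => z l - u l) : Fin (k+1) → Fin n → ℝ) i' l) =
      Matrix.det (Matrix.of fun i i' : Fin (k+1) =>
        ∑ l, (Fin.snoc B z : Fin (k+1) → Fin n → ℝ) i l *
          (Fin.snoc B z : Fin (k+1) → Fin n → ℝ) i' l) := by
  classical
  obtain ⟨cr, hcr⟩ := (Submodule.mem_span_range_iff_exists_fun ℝ).mp hu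
  set M₀ : Matrix (Fin (k+1)) (Fin (k+1)) ℝ :=
    Matrix.of (Fin.snoc (fun i : Fin k => fun k' : Fin (k+1) =>
      if k' = Fin.castSucc i then (1:ℝ) else 0)
      (Fin.snoc (fun i : Fin k => -cr i) 1)) with hM₀
  have hM : Matrix.of (Fin.snoc B (fun l => z l - u l) : Fin (k+1) → Fin n → ℝ) =
      M₀ * Matrix.of (Fin.snoc B z : Fin (k+1) → Fin n → ℝ) := by
    ext i l
    rw [Matrix.mul_apply]
    refine Fin.lastCases ?_ (fun i0 => ?_) i
    · have hul : u l = ∑ i0, cr i0 * B i0 l := by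
        have := congrFun hcr l
        simpa [Finset.sum_apply] using this.symm
      simp only [Matrix.of_apply, Fin.snoc_last, hM₀]
      rw [Fin.sum_univ_castSucc]
      simp only [Fin.snoc_castSucc, Fin.snoc_last]
      rw [hul]
      have hsum : ∑ x : Fin k, -cr x * B x l = -∑ x : Fin k, cr x * B x l := by
        rw [← Finset.sum_neg_distrib]
        exact Finset.sum_congr rfl fun i0 _ => by ring
      rw [hsum]; ring
    · simp only [Matrix.of_apply, Fin.snoc_castSucc, hM₀]
      rw [Finset.sum_eq_single (Fin.castSucc i0)]
      · simp [Fin.snoc_castSucc]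
      · intro b _ hb
        simp [hb]
      · intro hmem; exact absurd (Finset.mem_univ _) hmem
  have hdet1 : M₀.det = 1 := by
    have htri : M₀.BlockTriangular OrderDual.toDual := by
      intro a b hab
      have hab' : a < b := hab
      have ha : a ≠ Fin.last k := by
        intro h; rw [h] at hab'; exact absurd hab' (not_lt.2 (Fin.le_last b))
      obtain ⟨a0, rfl⟩ := Fin.exists_castSucc_eq.2 ha
      simp only [hM₀, Matrix.of_apply, Fin.snoc_castSucc]
      rw [if_neg]
      exact fun h => absurd h.symm (ne_of_lt hab')
    rw [Matrix.det_of_lowerTriangular M₀ htri]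
    apply Finset.prod_eq_one
    intro i _
    refine Fin.lastCases ?_ (fun i0 => ?_) i
    · simp [hM₀, Fin.snoc_last]
    · simp [hM₀, Fin.snoc_castSucc]
  rw [det_gram_transform _ _ M₀ hM, hdet1]
  ring

private lemma exists_gram_proj {d k : ℕ} (B : Fin k → Fin (d+1) → ℝ) (z : Fin (d+1) → ℝ) :
    ∃ u : Fin (d+1) → ℝ, u ∈ Submodule.span ℝ (Set.range B) ∧
      (∀ i, ∑ l, B i l * (z l - u l) = 0) ∧
      (∀ w ∈ Submodule.span ℝ (Set.range B),
        Real.sqrt (∑ l, (z l - u l)^2) ≤ Real.sqrt (∑ l, (z l - w l)^2)) := by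
  classical
  let V := EuclideanSpace ℝ (Fin (d+1))
  let B' : Fin k → V := fun i => WithLp.toLp 2 (B i)
  let z' : V := WithLp.toLp 2 z
  let E : Submodule ℝ V := (Submodule.span ℝ (Set.range B)).comap (WithLp.linearEquiv 2 ℝ (Fin (d+1) → ℝ)).toLinearMap
  haveI : FiniteDimensional ℝ E := inferInstance
  let u : V := E.starProjection z'
  have huE : u ∈ E := Submodule.coe_mem _
  have hperp : z' - u ∈ Eᗮ := Submodule.sub_starProjection_mem_orthogonal z'
  have hnorm : ∀ y : V, ‖y‖ = Real.sqrt (∑ l, (y l)^2) := by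
    intro y
    rw [EuclideanSpace.norm_eq]
    congr 1
    exact Finset.sum_congr rfl fun l _ => by rw [Real.norm_eq_abs, sq_abs]
  refine ⟨u.ofLp, huE, ?_, ?_⟩
  · intro i
    have h1 : (inner ℝ (B' i) (z' - u) : ℝ) = 0 :=
      (Submodule.mem_orthogonal E _).mp hperp _ (Submodule.subset_span (Set.mem_range_self i) : B i ∈ Submodule.span ℝ (Set.range B))
    rw [PiLp.inner_apply] at h1
    simp only [RCLike.inner_apply, starRingEnd_apply, star_trivial] at h1
    rw [← h1]
    exact Finset.sum_congr rfl fun l _ => mul_comm _ _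
  · intro w hw
    let w' : V := WithLp.toLp 2 w
    have hwE : w' ∈ E := hw
    have hmin : ‖z' - u‖ ≤ ‖z' - w'‖ := by
      rw [Submodule.starProjection_minimal]
      exact ciInf_le ⟨0, fun x ⟨a, ha⟩ => ha ▸ norm_nonneg _⟩ (⟨w', hwE⟩ : E)
    rw [hnorm, hnorm] at hmin
    exact hmin

set_option maxHeartbeats 2000000 in
theorem fundamental_volume_ratio_bound_lattice
    (d : ℕ)
    -- Λ is a full-rank lattice in ℝ^{d+1}, given by an ℝ-basis:
    (bas : Fin (d + 1) → Fin (d + 1) → ℝ) (hbas : LinearIndependent ℝ bas)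
    (L : Set (Fin (d + 1) → ℝ))
    (hL : L = (Submodule.span ℤ (Set.range bas) : Submodule ℤ (Fin (d + 1) → ℝ)))
    -- the only lattice point with x₀ = 0 is the origin:
    (hx0 : ∀ x ∈ L, x 0 = 0 → x = 0)
    -- the sequence of best approximation points to the x₀-axis:
    (zs : ℕ → Fin (d + 1) → ℝ) (hzs : ∀ ν, zs ν ∈ L)
    (hpos : ∀ ν, 0 < zs ν 0)
    (hinc : StrictMono fun ν => zs ν 0)
    (hdec : StrictAnti fun ν => ⨆ j : Fin d, |zs ν j.succ|)
    (hbest : ∀ ν, ∀ w ∈ L, |w 0| ≤ zs (ν + 1) 0 →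
      (⨆ j : Fin d, |w j.succ|) ≤ (⨆ j : Fin d, |zs ν j.succ|) →
      w = 0 ∨ w = zs ν ∨ w = -zs ν ∨ w = zs (ν + 1) ∨ w = -zs (ν + 1))
    -- the best approximation points do not lie in a proper linear subspace:
    (hspan : Submodule.span ℝ (Set.range zs) = ⊤)
    -- the selected indices ν₁ = 1, ν₂ = 2, ν₃, … (0-indexed by `n`):
    (n : ℕ → ℕ) (hn0 : n 0 = 0) (hn1 : n 1 = 1)
    (hsel : ∀ j : ℕ, 1 ≤ j → j < d →
      IsLeast {μ : ℕ | n j < μ ∧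
          LinearIndependent ℝ (fun i : Fin (j + 2) =>
            if (i : ℕ) ≤ j then zs (n i) else zs μ)}
        (n (j + 1))) :
    -- for every j, and every pair of ℤ-bases of Γ_j = π_j ∩ Λ and Γ_{j+1} = π_{j+1} ∩ Λ:
    ∀ j : ℕ, j < d →
      ∀ B1 : Fin (j + 1) → Fin (d + 1) → ℝ, ∀ B2 : Fin (j + 2) → Fin (d + 1) → ℝ,
      (LinearIndependent ℤ B1 ∧
        (Submodule.span ℤ (Set.range B1) : Set (Fin (d + 1) → ℝ)) =
          {v : Fin (d + 1) → ℝ | v ∈ L ∧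
            v ∈ Submodule.span ℝ (Set.range fun i : Fin (j + 1) => zs (n i))}) →
      (LinearIndependent ℤ B2 ∧
        (Submodule.span ℤ (Set.range B2) : Set (Fin (d + 1) → ℝ)) =
          {v : Fin (d + 1) → ℝ | v ∈ L ∧
            v ∈ Submodule.span ℝ (Set.range fun i : Fin (j + 2) => zs (n i))}) →
      gramVol B2 / gramVol B1 ≤
        2 * Real.sqrt d * (zs (n (j + 1)) 0 / zs (n (j + 1) - 1) 0) *
          ⨆ jj : Fin d, |zs (n (j + 1) - 1) jj.succ| := by
  classical
  intro j hjd B1 B2 hB1p hB2p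
  obtain ⟨hB1li, hB1span⟩ := hB1p
  obtain ⟨hB2li, hB2span⟩ := hB2p
  have hd1 : 0 < d := lt_of_le_of_lt (Nat.zero_le j) hjd
  haveI : Nonempty (Fin d) := ⟨⟨0, hd1⟩⟩
  set ν := n (j + 1) with hν
  set μ := ν - 1 with hμdef
  have hBdd : ∀ m : ℕ, BddAbove (Set.range fun jj : Fin d => |zs m jj.succ|) :=
    fun m => Set.Finite.bddAbove (Set.finite_range _)
  have hle_S : ∀ (m : ℕ) (jj : Fin d), |zs m jj.succ| ≤ ⨆ jj : Fin d, |zs m jj.succ| :=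
    fun m jj => le_ciSup (hBdd m) jj
  have hSnn : ∀ m : ℕ, 0 ≤ ⨆ jj : Fin d, |zs m jj.succ| :=
    fun m => le_trans (abs_nonneg _) (hle_S m ⟨0, hd1⟩)
  set t := zs ν 0 / zs μ 0 with htdef
  have ht1 : 1 ≤ t := (one_le_div (hpos μ)).2 (hinc.monotone (Nat.sub_le ν 1))
  have hRHS : 0 ≤ 2 * Real.sqrt d * t * ⨆ jj : Fin d, |zs μ jj.succ| :=
    mul_nonneg (mul_nonneg (mul_nonneg (by norm_num) (Real.sqrt_nonneg _)) (by linarith))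
      (hSnn μ)
  rcases eq_or_ne (gramVol B1) 0 with h0 | h0
  · rw [h0, div_zero]; exact hRHS
  -- spans
  set v : Fin (j + 1) → Fin (d + 1) → ℝ := fun i => zs (n i) with hvdef
  set v2 : Fin (j + 2) → Fin (d + 1) → ℝ := fun i => zs (n i) with hv2def
  have hB1mem : ∀ i, B1 i ∈ L ∧ B1 i ∈ Submodule.span ℝ (Set.range v) := by
    intro i
    have h1 : B1 i ∈ (Submodule.span ℤ (Set.range B1) : Set (Fin (d + 1) → ℝ)) :=
      Submodule.subset_span (Set.mem_range_self i)
    rw [hB1span] at h1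
    exact h1
  have hπle : Submodule.span ℝ (Set.range v) ≤ Submodule.span ℝ (Set.range v2) := by
    apply Submodule.span_mono
    rintro _ ⟨i, rfl⟩
    exact ⟨Fin.castSucc i, by simp [hvdef, hv2def]⟩
  have hmem2 : ∀ w : Fin (d + 1) → ℝ, w ∈ L → w ∈ Submodule.span ℝ (Set.range v2) →
      w ∈ Submodule.span ℤ (Set.range B2) := by
    intro w hwL hwπ
    have h1 : w ∈ (Submodule.span ℤ (Set.range B2) : Set (Fin (d + 1) → ℝ)) := by
      rw [hB2span]; exact ⟨hwL, hwπ⟩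
    exact h1
  have hπj_le : Submodule.span ℝ (Set.range v) ≤ Submodule.span ℝ (Set.range B1) := by
    rw [Submodule.span_le]
    rintro _ ⟨i, rfl⟩
    have h1 : v i ∈ (Submodule.span ℤ (Set.range B1) : Set (Fin (d + 1) → ℝ)) := by
      rw [hB1span]
      exact ⟨hzs _, Submodule.subset_span (Set.mem_range_self i)⟩
    exact Submodule.span_subset_span ℤ ℝ _ h1
  have hB1_le : Submodule.span ℝ (Set.range B1) ≤ Submodule.span ℝ (Set.range v) := by
    rw [Submodule.span_le]; rintro _ ⟨i, rfl⟩; exact (hB1mem i).2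
  -- snoc form of the selector families
  have hsnoc_eq : ∀ m : ℕ,
      (fun i : Fin (j + 2) => if (i : ℕ) ≤ j then zs (n i) else zs m) =
        Fin.snoc v (zs m) := by
    intro m
    funext i
    refine Fin.lastCases ?_ (fun i0 => ?_) i
    · rw [Fin.snoc_last, if_neg]
      simp [Fin.val_last]
    · have h1 : ((Fin.castSucc i0 : Fin (j + 2)) : ℕ) ≤ j := by
        simpa using Nat.lt_succ_iff.mp i0.isLt
      rw [Fin.snoc_castSucc, if_pos h1]
      simp [hvdef]
  -- position of zs ν and zs μ relative to π_j
  have key : zs ν ∉ Submodule.span ℝ (Set.range v) ∧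
      zs μ ∈ Submodule.span ℝ (Set.range v) := by
    rcases Nat.eq_zero_or_pos j with hj0 | hj1
    · subst hj0
      have hν1 : ν = 1 := by rw [hν]; exact hn1
      have hμ0 : μ = 0 := by rw [hμdef, hν1]
      constructor
      · intro hmem
        obtain ⟨cc, hcc⟩ := (Submodule.mem_span_range_iff_exists_fun ℝ).mp hmem
        rw [Fin.sum_univ_one] at hcc
        have hv0 : v 0 = zs 0 := by simp [hvdef, hn0]
        rw [hv0, hν1] at hcc
        have hcl : ∀ l, cc 0 * zs 0 l = zs 1 l := fun l => by
          have := congrFun hcc l; simpa using this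
        have h01 : zs 0 0 < zs 1 0 := hinc Nat.zero_lt_one
        have hcgt : 1 < cc 0 := by nlinarith [hpos 0, hcl 0]
        have hS10 : (⨆ jj : Fin d, |zs 1 jj.succ|) < ⨆ jj : Fin d, |zs 0 jj.succ| :=
          hdec Nat.zero_lt_one
        have hS01 : (⨆ jj : Fin d, |zs 0 jj.succ|) ≤ ⨆ jj : Fin d, |zs 1 jj.succ| := by
          apply ciSup_le
          intro jj
          calc |zs 0 jj.succ| ≤ cc 0 * |zs 0 jj.succ| :=
              le_mul_of_one_le_left (abs_nonneg _) hcgt.le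
          _ = |cc 0 * zs 0 jj.succ| := by rw [abs_mul, abs_of_pos (show (0:ℝ) < cc 0 by linarith)]
          _ = |zs 1 jj.succ| := by rw [hcl]
          _ ≤ _ := hle_S 1 jj
        linarith
      · rw [hμ0]
        exact Submodule.subset_span ⟨0, by simp [hvdef, hn0]⟩
    · obtain ⟨⟨hlt, hli⟩, hleast⟩ := hsel j hj1 hjd
      rw [hsnoc_eq] at hli
      obtain ⟨hliv, hνnot⟩ := linearIndependent_fin_snoc.mp hli
      refine ⟨hνnot, ?_⟩
      have hge : n j ≤ μ := by omega
      rcases eq_or_lt_of_le hge with heq | hgt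
      · have hzv : zs μ = v ⟨j, Nat.lt_succ_self j⟩ := by simp [hvdef, ← heq]
        rw [hzv]
        exact Submodule.subset_span (Set.mem_range_self _)
      · by_contra hnot
        have hc : ν ≤ μ := hleast ⟨hgt, by
          rw [hsnoc_eq]; exact linearIndependent_fin_snoc.mpr ⟨hliv, hnot⟩⟩
        omega
  obtain ⟨hzν_not, hzμ_mem⟩ := key
  -- orthogonal projection of zs ν onto span B1
  obtain ⟨u, huB1, horth, hmin⟩ := exists_gram_proj B1 (zs ν)
  -- integer coefficients of (B1, zs ν) in terms of B2
  have hA : ∀ i : Fin (j + 2), (Fin.snoc B1 (zs ν) : Fin (j+2) → Fin (d+1) → ℝ) i ∈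
      Submodule.span ℤ (Set.range B2) := by
    refine Fin.lastCases ?_ (fun i0 => ?_)
    · rw [Fin.snoc_last]
      refine hmem2 _ (hzs ν) (Submodule.subset_span ⟨Fin.last (j + 1), ?_⟩)
      simp [hv2def, hν]
    · rw [Fin.snoc_castSucc]
      exact hmem2 _ (hB1mem i0).1 (hπle (hB1mem i0).2)
  choose c hc using fun i => (Submodule.mem_span_range_iff_exists_fun ℤ).mp (hA i)
  set Mint : Matrix (Fin (j + 2)) (Fin (j + 2)) ℤ := Matrix.of fun i k => c i k with hMint
  have hAM : Matrix.of (Fin.snoc B1 (zs ν) : Fin (j+2) → Fin (d+1) → ℝ) =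
      (Mint.map (Int.cast : ℤ → ℝ)) * Matrix.of B2 := by
    ext i l
    rw [Matrix.mul_apply]
    have h1 := congrFun (hc i) l
    simp only [Finset.sum_apply, Pi.smul_apply, zsmul_eq_mul] at h1
    simpa [Matrix.map_apply, hMint] using h1.symm
  have e1 := det_gram_transform _ _ _ hAM
  have hDcast : ((Mint.map (Int.cast : ℤ → ℝ)).det) = ((Mint.det : ℤ) : ℝ) :=
    (RingHom.map_det (Int.castRingHom ℝ) Mint).symm
  have e2 := det_gram_snoc_sub_mem B1 (zs ν) u huB1
  have e3 := det_gram_snoc_orth B1 (fun l => zs ν l - u l) horth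
  -- positivity facts
  have hdet1pos : 0 < Matrix.det (Matrix.of fun i i' : Fin (j + 1) =>
      ∑ l, B1 i l * B1 i' l) := by
    have h1 : gramVol B1 ≠ 0 := h0
    unfold gramVol at h1
    exact Real.sqrt_ne_zero'.mp h1
  have hzνnotB1 : zs ν ∉ Submodule.span ℝ (Set.range B1) := fun hmem => hzν_not (hB1_le hmem)
  have hgne : ∃ l, zs ν l - u l ≠ 0 := by
    by_contra hcon
    push_neg at hcon
    have hzu : zs ν = u := funext fun l => by have := hcon l; linarith
    exact hzνnotB1 (hzu ▸ huB1)
  have hgpos : 0 < ∑ l, (zs ν l - u l) * (zs ν l - u l) := by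
    obtain ⟨l0, hl0⟩ := hgne
    exact Finset.sum_pos' (fun l _ => mul_self_nonneg _)
      ⟨l0, Finset.mem_univ _, mul_self_pos.mpr hl0⟩
  have hAdetpos : 0 < Matrix.det (Matrix.of fun i i' : Fin (j + 2) =>
      ∑ l, (Fin.snoc B1 (zs ν) : Fin (j+2) → Fin (d+1) → ℝ) i l *
        (Fin.snoc B1 (zs ν) : Fin (j+2) → Fin (d+1) → ℝ) i' l) := by
    rw [← e2, e3]
    exact mul_pos hgpos hdet1pos
  have hDne : Mint.det ≠ 0 := by
    intro hD
    rw [e1, hDcast, hD] at hAdetpos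
    norm_num at hAdetpos
  have hD1 : (1 : ℝ) ≤ ((Mint.det : ℤ) : ℝ) ^ 2 := by
    have h1 : (1 : ℤ) ≤ Mint.det ^ 2 := by
      nlinarith [Int.one_le_abs hDne, sq_abs Mint.det, abs_nonneg Mint.det]
    exact_mod_cast h1
  have hG2le : Matrix.det (Matrix.of fun i i' : Fin (j + 2) => ∑ l, B2 i l * B2 i' l) ≤
      (∑ l, (zs ν l - u l) * (zs ν l - u l)) *
        Matrix.det (Matrix.of fun i i' : Fin (j + 1) => ∑ l, B1 i l * B1 i' l) := by
    calc Matrix.det (Matrix.of fun i i' : Fin (j + 2) => ∑ l, B2 i l * B2 i' l)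
        ≤ ((Mint.det : ℤ) : ℝ) ^ 2 *
          Matrix.det (Matrix.of fun i i' : Fin (j + 2) => ∑ l, B2 i l * B2 i' l) :=
          le_mul_of_one_le_left (gram_det_nonneg B2) hD1
      _ = Matrix.det (Matrix.of fun i i' : Fin (j + 2) =>
          ∑ l, (Fin.snoc B1 (zs ν) : Fin (j+2) → Fin (d+1) → ℝ) i l *
            (Fin.snoc B1 (zs ν) : Fin (j+2) → Fin (d+1) → ℝ) i' l) := by
          rw [e1, hDcast]
      _ = _ := by rw [← e2, e3]
  have hvol : gramVol B2 ≤
      Real.sqrt (∑ l, (zs ν l - u l) * (zs ν l - u l)) * gramVol B1 := by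
    unfold gramVol
    rw [← Real.sqrt_mul (Finset.sum_nonneg fun l _ => mul_self_nonneg _)]
    exact Real.sqrt_le_sqrt hG2le
  have hvolpos : 0 < gramVol B1 := lt_of_le_of_ne (Real.sqrt_nonneg _) (Ne.symm h0)
  rw [div_le_iff₀ hvolpos]
  refine le_trans hvol (mul_le_mul_of_nonneg_right ?_ hvolpos.le)
  -- bound the distance by the specific vector zs ν - t • zs μ
  have hw : (t • zs μ) ∈ Submodule.span ℝ (Set.range B1) :=
    Submodule.smul_mem _ t (hπj_le hzμ_mem)
  have hmm := hmin (t • zs μ) hw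
  simp only [Pi.smul_apply, smul_eq_mul] at hmm
  have hms : ∑ l, (zs ν l - u l) * (zs ν l - u l) = ∑ l, (zs ν l - u l) ^ 2 := by
    simp [sq]
  rw [hms]
  refine le_trans hmm ?_
  -- numeric estimate
  set C := (⨆ jj : Fin d, |zs ν jj.succ|) + t * (⨆ jj : Fin d, |zs μ jj.succ|) with hC
  have hy0 : zs ν 0 - t * zs μ 0 = 0 := by
    rw [htdef, div_mul_cancel₀ _ (hpos μ).ne', sub_self]
  have hterm : ∀ jj : Fin d, (zs ν jj.succ - t * zs μ jj.succ) ^ 2 ≤ C ^ 2 := by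
    intro jj
    have h1 : |zs ν jj.succ - t * zs μ jj.succ| ≤ C := by
      calc |zs ν jj.succ - t * zs μ jj.succ|
          ≤ |zs ν jj.succ| + |t * zs μ jj.succ| := abs_sub _ _
        _ = |zs ν jj.succ| + t * |zs μ jj.succ| := by
            rw [abs_mul, abs_of_nonneg (by linarith : (0:ℝ) ≤ t)]
        _ ≤ C := add_le_add (hle_S ν jj)
            (mul_le_mul_of_nonneg_left (hle_S μ jj) (by linarith))
    calc (zs ν jj.succ - t * zs μ jj.succ) ^ 2 = |zs ν jj.succ - t * zs μ jj.succ| ^ 2 :=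
        (sq_abs _).symm
      _ ≤ C ^ 2 := pow_le_pow_left₀ (abs_nonneg _) h1 2
  have hCnn : 0 ≤ C := add_nonneg (hSnn ν) (mul_nonneg (by linarith) (hSnn μ))
  have hsum_le : ∑ l, (zs ν l - t * zs μ l) ^ 2 ≤ d * C ^ 2 := by
    rw [Fin.sum_univ_succ, hy0]
    have h2 : ∑ jj : Fin d, (zs ν jj.succ - t * zs μ jj.succ) ^ 2 ≤ d * C ^ 2 := by
      have h3 := Finset.sum_le_card_nsmul Finset.univ
        (fun jj : Fin d => (zs ν jj.succ - t * zs μ jj.succ) ^ 2) (C ^ 2)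
        (fun jj _ => hterm jj)
      simpa [Finset.card_univ, nsmul_eq_mul] using h3
    simpa using h2
  have hSle : (⨆ jj : Fin d, |zs ν jj.succ|) ≤ ⨆ jj : Fin d, |zs μ jj.succ| :=
    hdec.antitone (Nat.sub_le ν 1)
  calc Real.sqrt (∑ l, (zs ν l - t * zs μ l) ^ 2)
      ≤ Real.sqrt (d * C ^ 2) := Real.sqrt_le_sqrt hsum_le
    _ = Real.sqrt d * C := by
        rw [Real.sqrt_mul (Nat.cast_nonneg d), Real.sqrt_sq hCnn]
    _ ≤ Real.sqrt d * (2 * t * ⨆ jj : Fin d, |zs μ jj.succ|) := by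
        apply mul_le_mul_of_nonneg_left _ (Real.sqrt_nonneg _)
        rw [hC]
        nlinarith [hSnn μ]
    _ = 2 * Real.sqrt d * t * ⨆ jj : Fin d, |zs μ jj.succ| := by ring
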